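/- arXiv:2208.13207 — 4 statements merged into one kernel-verified Lean document; each statement's English description precedes it below -/
import Mathlib

section
/- Let k be a positive integer and let (X, Y) be a k-biplex in a bipartite graph G = (L ∪ R, E). If |X| ≥ 2k+1 and |Y| ≥ 2k+1, then the induced bipartite subgraph G[X ∪ Y] is connected. -/
open Finset

lemma kbiplex_aux {V : Type*} [DecidableEq V] (S : Finset V) (P Q : V → Prop)
    [DecidablePred P] [DecidablePred Q] (k : ℕ)
    (hP : (S.filter fun s => ¬ P s).card ≤ k) (hQ : (S.filter fun s => ¬ Q s).card ≤ k)
    (hS : 2 * k + 1 ≤ S.card) : ∃ s ∈ S, P s ∧ Q s := by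
  by_contra h
  push_neg at h
  have hsub : S ⊆ (S.filter fun s => ¬ P s) ∪ (S.filter fun s => ¬ Q s) := by
    intro s hs
    have := h s hs
    simp only [mem_union, mem_filter]
    tauto
  have := (Finset.card_le_card hsub).trans (Finset.card_union_le _ _)
  omega

/-- Let `k` be a positive integer and `(X, Y)` a `k`-biplex in a bipartite
graph `G = (L ∪ R, E)`.  If `|X| ≥ 2k+1` and `|Y| ≥ 2k+1`, then the induced bipartite
subgraph `G[X ∪ Y]` is connected. -/
theorem kbiplex_connected {V : Type*} [Fintype V] [DecidableEq V]
    (L R : Finset V) (hLR : Disjoint L R)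
    (E : V → V → Prop) [DecidableRel E]
    (hE : ∀ v u, E v u → v ∈ L ∧ u ∈ R)
    (k : ℕ) (hk : 1 ≤ k)
    (X Y : Finset V) (hX : X ⊆ L) (hY : Y ⊆ R)
    (hbX : ∀ x ∈ X, (Y.filter fun y => ¬ E x y).card ≤ k)
    (hbY : ∀ y ∈ Y, (X.filter fun x => ¬ E x y).card ≤ k)
    (hXcard : 2 * k + 1 ≤ X.card) (hYcard : 2 * k + 1 ≤ Y.card) :
    ((SimpleGraph.fromRel E).induce (↑(X ∪ Y) : Set V)).Connected := by
  classical
  set G := (SimpleGraph.fromRel E).induce (↑(X ∪ Y) : Set V) with hG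
  have hne : ∀ x ∈ X, ∀ y ∈ Y, x ≠ y := by
    intro x hx y hy h
    exact (Finset.disjoint_left.mp hLR (hX hx)) (h ▸ hY hy)
  have memX : ∀ {x}, x ∈ X → x ∈ (↑(X ∪ Y) : Set V) :=
    fun h => Finset.mem_coe.mpr (mem_union_left _ h)
  have memY : ∀ {y}, y ∈ Y → y ∈ (↑(X ∪ Y) : Set V) :=
    fun h => Finset.mem_coe.mpr (mem_union_right _ h)
  have reach : ∀ x (hx : x ∈ X) y (hy : y ∈ Y), E x y →
      G.Reachable ⟨x, memX hx⟩ ⟨y, memY hy⟩ := by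
    intro x hx y hy hxy
    exact SimpleGraph.Adj.reachable ⟨hne x hx y hy, Or.inl hxy⟩
  -- x to y reachability
  have reachXY : ∀ x (hx : x ∈ X) y (hy : y ∈ Y),
      G.Reachable ⟨x, memX hx⟩ ⟨y, memY hy⟩ := by
    intro x hx y hy
    obtain ⟨y1, hy1, h1, -⟩ := kbiplex_aux Y (fun y => E x y) (fun y => E x y) k
      (hbX x hx) (hbX x hx) hYcard
    obtain ⟨x', hx', h2, h3⟩ := kbiplex_aux X (fun x' => E x' y1) (fun x' => E x' y) k
      (hbY y1 hy1) (hbY y hy) hXcard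
    exact (reach x hx y1 hy1 h1).trans
      ((reach x' hx' y1 hy1 h2).symm.trans (reach x' hx' y hy h3))
  rw [SimpleGraph.connected_iff]
  refine ⟨?_, ?_⟩
  · rintro ⟨a, ha⟩ ⟨b, hb⟩
    have ha' : a ∈ X ∨ a ∈ Y := mem_union.mp (Finset.mem_coe.mp ha)
    have hb' : b ∈ X ∨ b ∈ Y := mem_union.mp (Finset.mem_coe.mp hb)
    rcases ha' with ha' | ha' <;> rcases hb' with hb' | hb'
    · obtain ⟨y, hy, h1, h2⟩ := kbiplex_aux Y (fun y => E a y) (fun y => E b y) k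
        (hbX a ha') (hbX b hb') hYcard
      exact (reach a ha' y hy h1).trans (reach b hb' y hy h2).symm
    · exact reachXY a ha' b hb'
    · exact (reachXY b hb' a ha').symm
    · obtain ⟨x, hx, h1, h2⟩ := kbiplex_aux X (fun x => E x a) (fun x => E x b) k
        (hbY a ha') (hbY b hb') hXcard
      exact (reach x hx a ha' h1).symm.trans (reach x hx b hb' h2)
  · obtain ⟨x0, hx0⟩ := Finset.card_pos.mp (by omega : 0 < X.card)
    exact ⟨⟨x0, memX hx0⟩⟩
end

section
/- (Correctness of the branch upper bounds τ_L and τ_R.) Let k be a positive integer and let S_L, C_L ⊆ L and S_R, C_R ⊆ R with S_L and S_R nonempty. Define τ_L = min_{u ∈ S_R} δ(u, S_L ∪ C_L) + k and τ_R = min_{v ∈ S_L} δ(v, S_R ∪ C_R) + k. Then every k-biplex (X, Y) with S_L ⊆ X ⊆ S_L ∪ C_L and S_R ⊆ Y ⊆ S_R ∪ C_R satisfies |X| ≤ τ_L, |Y| ≤ τ_R, and the number of edges of G between X and Y is at most τ_L · τ_R. -/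
open Finset

/-- **correctness of the branch upper bounds `τ_L` and `τ_R`.**
With `τ_L = min_{u ∈ S_R} δ(u, S_L ∪ C_L) + k` and `τ_R = min_{v ∈ S_L} δ(v, S_R ∪ C_R) + k`,
every `k`-biplex `(X, Y)` with `S_L ⊆ X ⊆ S_L ∪ C_L` and `S_R ⊆ Y ⊆ S_R ∪ C_R` satisfies
`|X| ≤ τ_L`, `|Y| ≤ τ_R`, and has at most `τ_L · τ_R` edges between `X` and `Y`. -/
theorem branch_upper_bounds_correct {V : Type*} [DecidableEq V]
    (L R : Finset V) (hLR : Disjoint L R)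
    (E : V → V → Prop) [DecidableRel E]
    (hE : ∀ v u, E v u → v ∈ L ∧ u ∈ R)
    (k : ℕ) (hk : 1 ≤ k)
    (SL CL SR CR : Finset V)
    (hSL : SL ⊆ L) (hCL : CL ⊆ L) (hSR : SR ⊆ R) (hCR : CR ⊆ R)
    (hSLne : SL.Nonempty) (hSRne : SR.Nonempty)
    (X Y : Finset V) (hX1 : SL ⊆ X) (hX2 : X ⊆ SL ∪ CL) (hY1 : SR ⊆ Y) (hY2 : Y ⊆ SR ∪ CR)
    (hbX : ∀ x ∈ X, (Y.filter fun y => ¬ E x y).card ≤ k)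
    (hbY : ∀ y ∈ Y, (X.filter fun x => ¬ E x y).card ≤ k) :
    X.card ≤ SR.inf' hSRne (fun u => ((SL ∪ CL).filter fun v => E v u).card) + k ∧
    Y.card ≤ SL.inf' hSLne (fun v => ((SR ∪ CR).filter fun u => E v u).card) + k ∧
    ((X ×ˢ Y).filter fun p => E p.1 p.2).card ≤
      (SR.inf' hSRne (fun u => ((SL ∪ CL).filter fun v => E v u).card) + k) *
        (SL.inf' hSLne (fun v => ((SR ∪ CR).filter fun u => E v u).card) + k) := by
  have hXb : X.card ≤ SR.inf' hSRne (fun u => ((SL ∪ CL).filter fun v => E v u).card) + k := by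
    obtain ⟨u, hu, heq⟩ := exists_mem_eq_inf' hSRne (fun u => ((SL ∪ CL).filter fun v => E v u).card)
    rw [heq]
    have hsplit := card_filter_add_card_filter_not (s := X) (p := fun v => E v u)
    have h1 : (X.filter fun v => E v u).card ≤ ((SL ∪ CL).filter fun v => E v u).card :=
      card_le_card (filter_subset_filter _ hX2)
    have h2 : (X.filter fun v => ¬ E v u).card ≤ k := hbY u (hY1 hu)
    omega
  have hYb : Y.card ≤ SL.inf' hSLne (fun v => ((SR ∪ CR).filter fun u => E v u).card) + k := by
    obtain ⟨v, hv, heq⟩ := exists_mem_eq_inf' hSLne (fun v => ((SR ∪ CR).filter fun u => E v u).card)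
    rw [heq]
    have hsplit := card_filter_add_card_filter_not (s := Y) (p := fun u => E v u)
    have h1 : (Y.filter fun u => E v u).card ≤ ((SR ∪ CR).filter fun u => E v u).card :=
      card_le_card (filter_subset_filter _ hY2)
    have h2 : (Y.filter fun u => ¬ E v u).card ≤ k := hbX v (hX1 hv)
    omega
  refine ⟨hXb, hYb, ?_⟩
  calc ((X ×ˢ Y).filter fun p => E p.1 p.2).card ≤ (X ×ˢ Y).card :=
        card_le_card (filter_subset _ _)
    _ = X.card * Y.card := card_product X Y
    _ ≤ _ := Nat.mul_le_mul hXb hYb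
end

section
/- (Correctness of pruning condition (4).) Let k be a positive integer, let S_L, C_L ⊆ L and S_R, C_R ⊆ R, and let v ∈ L be a vertex with v ∉ S_L ∪ C_L such that (i) δ̄(v, S_R ∪ C_R) ≤ k, and (ii) every w ∈ S_R ∪ C_R with δ̄(w, S_L ∪ C_L) ≥ k is a neighbor of v. Then for every k-biplex (X, Y) with X ⊆ S_L ∪ C_L and Y ⊆ S_R ∪ C_R, the pair (X ∪ {v}, Y) is also a k-biplex. Consequently, no k-biplex (X, Y) with X ⊆ S_L ∪ C_L and Y ⊆ S_R ∪ C_R is maximal in G if it excludes v. -/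
open Finset

/-- `(X, Y)` is a `k`-biplex w.r.t. the edge relation `E`. -/
def IsKBiplex {V : Type*} [DecidableEq V] (E : V → V → Prop) [DecidableRel E]
    (k : ℕ) (X Y : Finset V) : Prop :=
  (∀ x ∈ X, (Y.filter fun y => ¬ E x y).card ≤ k) ∧
  (∀ y ∈ Y, (X.filter fun x => ¬ E x y).card ≤ k)

/-- **correctness of pruning condition (4).**
Let `v ∈ L` with `v ∉ S_L ∪ C_L` be such that (i) `δ̄(v, S_R ∪ C_R) ≤ k`, and (ii) every
`w ∈ S_R ∪ C_R` with `δ̄(w, S_L ∪ C_L) ≥ k` is a neighbor of `v`.  Then for every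
`k`-biplex `(X, Y)` with `X ⊆ S_L ∪ C_L` and `Y ⊆ S_R ∪ C_R`, the pair `(X ∪ {v}, Y)` is
also a `k`-biplex; consequently no such `(X, Y)` is a maximal `k`-biplex in `G`. -/
theorem pruning_condition_four_correct {V : Type*} [DecidableEq V]
    (L R : Finset V) (hLR : Disjoint L R)
    (E : V → V → Prop) [DecidableRel E]
    (hE : ∀ v u, E v u → v ∈ L ∧ u ∈ R)
    (k : ℕ) (hk : 1 ≤ k)
    (SL CL SR CR : Finset V)
    (hSL : SL ⊆ L) (hCL : CL ⊆ L) (hSR : SR ⊆ R) (hCR : CR ⊆ R)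
    (v : V) (hvL : v ∈ L) (hv : v ∉ SL ∪ CL)
    (hcond1 : ((SR ∪ CR).filter fun w => ¬ E v w).card ≤ k)
    (hcond2 : ∀ w ∈ SR ∪ CR, k ≤ ((SL ∪ CL).filter fun x => ¬ E x w).card → E v w) :
    ∀ X Y : Finset V, X ⊆ SL ∪ CL → Y ⊆ SR ∪ CR → IsKBiplex E k X Y →
      IsKBiplex E k (insert v X) Y ∧
      ¬ (∀ X' Y' : Finset V, X' ⊆ L → Y' ⊆ R → X ⊆ X' → Y ⊆ Y' →
          IsKBiplex E k X' Y' → X' = X ∧ Y' = Y) := by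
  intro X Y hX hY hbip
  have hvX : v ∉ X := fun h => hv (hX h)
  have hnew : IsKBiplex E k (insert v X) Y := by
    constructor
    · intro x hx
      rcases Finset.mem_insert.mp hx with rfl | hx
      · calc (Y.filter fun y => ¬ E x y).card
            ≤ ((SR ∪ CR).filter fun w => ¬ E x w).card :=
              Finset.card_le_card (Finset.filter_subset_filter _ hY)
          _ ≤ k := hcond1
      · exact hbip.1 x hx
    · intro y hy
      by_cases hvy : E v y
      · have : (insert v X).filter (fun x => ¬ E x y) = X.filter (fun x => ¬ E x y) := by
          rw [Finset.filter_insert, if_neg (by simp [hvy])]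
        rw [this]; exact hbip.2 y hy
      · have hlt : ((SL ∪ CL).filter fun x => ¬ E x y).card < k := by
          by_contra h
          exact hvy (hcond2 y (hY hy) (le_of_not_gt h))
        have hXle : (X.filter fun x => ¬ E x y).card ≤ ((SL ∪ CL).filter fun x => ¬ E x y).card :=
          Finset.card_le_card (Finset.filter_subset_filter _ hX)
        have : (insert v X).filter (fun x => ¬ E x y)
            = insert v (X.filter fun x => ¬ E x y) := by
          rw [Finset.filter_insert, if_pos (by simp [hvy])]
        rw [this]
        calc (insert v (X.filter fun x => ¬ E x y)).card
            ≤ (X.filter fun x => ¬ E x y).card + 1 := Finset.card_insert_le _ _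
          _ ≤ k := by omega
  refine ⟨hnew, fun hmax => ?_⟩
  have hXL : X ⊆ L := hX.trans (Finset.union_subset hSL hCL)
  have hYR : Y ⊆ R := hY.trans (Finset.union_subset hSR hCR)
  have := hmax (insert v X) Y (Finset.insert_subset hvL hXL) hYR
    (Finset.subset_insert _ _) subset_rfl hnew
  exact hvX (this.1 ▸ Finset.mem_insert_self v X)
end

section
/- For every integer k ≥ 0 and every real number x ≥ 2, one has x^{k+4} − 2x^{k+3} + x² − x + 1 > 0. Consequently, every real root of the polynomial x^{k+4} − 2x^{k+3} + x² − x + 1 is strictly less than 2; in particular, the exponential base γ_k in the worst-case time complexity O(n · d · γ_k^n) of FastBB is strictly smaller than 2. -/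
/-- For every integer `k ≥ 0` and every real `x ≥ 2`,
`x^{k+4} − 2x^{k+3} + x² − x + 1 > 0`; consequently every real root of this polynomial
is strictly less than `2` (so the base `γ_k` of FastBB is strictly smaller than `2`). -/
theorem fastbb_base_lt_two (k : ℕ) :
    (∀ x : ℝ, 2 ≤ x → 0 < x ^ (k + 4) - 2 * x ^ (k + 3) + x ^ 2 - x + 1) ∧
    (∀ x : ℝ, x ^ (k + 4) - 2 * x ^ (k + 3) + x ^ 2 - x + 1 = 0 → x < 2) := by
  have key : ∀ x : ℝ, 2 ≤ x → 0 < x ^ (k + 4) - 2 * x ^ (k + 3) + x ^ 2 - x + 1 := by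
    intro x hx
    have hx0 : (0:ℝ) ≤ x := by linarith
    have hp : (0:ℝ) ≤ x ^ (k + 3) := pow_nonneg hx0 _
    have h1 : x ^ (k + 4) = x ^ (k + 3) * x := by ring
    nlinarith [mul_nonneg hp (by linarith : (0:ℝ) ≤ x - 2), sq_nonneg (x - 1)]
  refine ⟨key, fun x hx => ?_⟩
  by_contra h
  have := key x (by linarith)
  linarith
end
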